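/- Let j ≥ 1 and let n = 2j+4. Let A = J_n − I_n + D, where D is a diagonal n×n (0,1)-matrix with exactly j+2 diagonal entries equal to 1 (the adjacency matrix of the complete graph K_{2j+4} with self-loops added on j+2 of its vertices). Then the multiset of eigenvalues of A is: ((2j+3) + √(4j²+16j+17))/2 with multiplicity 1, 0 with multiplicity j+1, −1 with multiplicity j+1, and ((2j+3) − √(4j²+16j+17))/2 with multiplicity 1. Consequently λ_1(A) − λ_{n−j}(A) = ((2j+5) + √(4j²+16j+17))/2. -/

import Mathlib

open Matrix

open Polynomial

variable {n : Type*} [Fintype n] [DecidableEq n]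

lemma myEvalCharpoly (M : Matrix n n ℝ) (x : ℝ) :
    M.charpoly.eval x = (x • (1 : Matrix n n ℝ) - M).det := by
  have : M.charpoly.eval x = ((evalRingHom x).mapMatrix M.charmatrix).det := by
    rw [Matrix.charpoly, ← Polynomial.coe_evalRingHom, RingHom.map_det]
  rw [this]
  congr 1
  ext i k
  by_cases h : i = k <;>
    simp [h, charmatrix_apply, Matrix.one_apply, Matrix.diagonal_apply, Ne.symm]

lemma myCharpolyDiagonal (v : n → ℝ) :
    (Matrix.diagonal v).charpoly = ∏ i, (X - C (v i)) := by
  have : charmatrix (Matrix.diagonal v) = Matrix.diagonal (fun i => X - C (v i)) := by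
    ext i k
    by_cases h : i = k <;>
      simp [h, charmatrix_apply, Matrix.diagonal_apply, Ne.symm]
  rw [Matrix.charpoly, this, Matrix.det_diagonal]

lemma myCharpolyHerm (M : Matrix n n ℝ) (hM : M.IsHermitian) :
    M.charpoly = ∏ i, (X - C (hM.eigenvalues i)) := by
  rw [← myCharpolyDiagonal]
  apply Polynomial.funext
  intro x
  rw [myEvalCharpoly, myEvalCharpoly]
  have hspec := hM.spectral_theorem
  have hUU : (hM.eigenvectorUnitary : Matrix n n ℝ) * star (hM.eigenvectorUnitary : Matrix n n ℝ) = 1 :=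
    Matrix.mem_unitaryGroup_iff.mp hM.eigenvectorUnitary.2
  have hD : Matrix.diagonal (RCLike.ofReal ∘ hM.eigenvalues) = Matrix.diagonal hM.eigenvalues := by
    congr 1
  have key : x • (1 : Matrix n n ℝ) - M
      = (hM.eigenvectorUnitary : Matrix n n ℝ) *
          (x • (1 : Matrix n n ℝ) - Matrix.diagonal hM.eigenvalues) *
          star (hM.eigenvectorUnitary : Matrix n n ℝ) := by
    conv_lhs => rw [hspec]
    rw [Unitary.conjStarAlgAut_apply, Matrix.mul_sub, Matrix.sub_mul, hD, Matrix.mul_smul, Matrix.mul_one, Matrix.smul_mul, hUU]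
  have hdet1 : (hM.eigenvectorUnitary : Matrix n n ℝ).det *
      (star (hM.eigenvectorUnitary : Matrix n n ℝ)).det = 1 := by
    rw [← Matrix.det_mul, hUU, Matrix.det_one]
  rw [key, Matrix.det_mul, Matrix.det_mul]
  linear_combination (x • (1 : Matrix n n ℝ) - Matrix.diagonal hM.eigenvalues).det * hdet1

lemma detStep (j : ℕ)
    (D : Matrix (Fin (2 * j + 4)) (Fin (2 * j + 4)) ℝ) (hDdiag : D.IsDiag)
    (hD01 : ∀ a, D a a = 0 ∨ D a a = 1)
    (hDcard : (Finset.univ.filter fun a => D a a = 1).card = j + 2)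
    (A : Matrix (Fin (2 * j + 4)) (Fin (2 * j + 4)) ℝ)
    (hAdef : A = (Matrix.of fun (_ : Fin (2 * j + 4)) (_ : Fin (2 * j + 4)) => (1 : ℝ))
        - 1 + D)
    (x : ℝ) (hx : x ≠ 0) (hx1 : x + 1 ≠ 0) :
    (x • (1 : Matrix (Fin (2 * j + 4)) (Fin (2 * j + 4)) ℝ) - A).det =
      x ^ (j+1) * (x+1) ^ (j+1) * (x^2 - (2*(j:ℝ)+3)*x - ((j:ℝ)+2)) := by
  set e : Fin (2 * j + 4) → ℝ := fun i => x + 1 - D i i with he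
  have he0 : ∀ i, e i ≠ 0 := by
    intro i
    rcases hD01 i with h | h <;> simp [he, h, hx, hx1, sub_eq_zero] <;>
      first | exact hx1 | skip
  have hfact : x • (1 : Matrix (Fin (2 * j + 4)) (Fin (2 * j + 4)) ℝ) - A =
      Matrix.diagonal e *
        (1 + Matrix.replicateCol Unit (fun i => -(e i)⁻¹) * Matrix.replicateRow Unit (fun _ => (1:ℝ))) := by
    ext i k
    rw [Matrix.diagonal_mul]
    by_cases h : i = k
    · subst h
      simp [hAdef, Matrix.mul_apply, Matrix.one_apply, mul_add,
        mul_inv_cancel₀ (he0 i), he]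
      have hei : 1 + x - D i i ≠ 0 := by rw [add_comm]; exact he0 i
      linear_combination mul_inv_cancel₀ hei
    · have hD0 : D i k = 0 := hDdiag h
      simp [hAdef, Matrix.mul_apply, Matrix.one_apply, h, hD0, mul_add,
        mul_inv_cancel₀ (he0 i), he]
      exact (mul_inv_cancel₀ (he0 i)).symm
  rw [hfact, Matrix.det_mul, Matrix.det_diagonal, Matrix.det_one_add_replicateCol_mul_replicateRow]
  have hcard2 : (Finset.univ.filter fun a : Fin (2*j+4) => ¬ (D a a = 1)).card = j + 2 := by
    have := Finset.card_filter_add_card_filter_not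
      (s := (Finset.univ : Finset (Fin (2*j+4)))) (p := fun a => D a a = 1)
    simp only [Finset.card_univ, Fintype.card_fin] at this
    omega
  have hprod : ∏ i, e i = x ^ (j+2) * (x+1) ^ (j+2) := by
    rw [← Finset.prod_filter_mul_prod_filter_not Finset.univ (fun a => D a a = 1)]
    rw [Finset.prod_congr rfl (fun a ha => ?_), Finset.prod_const, hDcard,
        Finset.prod_congr rfl (g := fun _ => x + 1) (fun a ha => ?_), Finset.prod_const, hcard2]
    · simp only [Finset.mem_filter] at ha
      rcases hD01 a with h | h
      · simp [he, h]
      · exact absurd h ha.2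
    · simp only [Finset.mem_filter] at ha
      simp [he, ha.2]
  have hsum : ((fun _ : Fin (2*j+4) => (1:ℝ)) ⬝ᵥ fun i => -(e i)⁻¹) =
      -(((j:ℝ)+2) * x⁻¹) - ((j:ℝ)+2) * (x+1)⁻¹ := by
    simp only [dotProduct, one_mul]
    rw [← Finset.sum_filter_add_sum_filter_not Finset.univ (fun a => D a a = 1)]
    rw [Finset.sum_congr rfl (g := fun _ => -x⁻¹) (fun a ha => ?_), Finset.sum_const, hDcard,
        Finset.sum_congr rfl (g := fun _ => -(x+1)⁻¹) (fun a ha => ?_), Finset.sum_const, hcard2]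
    · push_cast
      ring
    · simp only [Finset.mem_filter] at ha
      rcases hD01 a with h | h
      · simp [he, h]
      · exact absurd h ha.2
    · simp only [Finset.mem_filter] at ha
      simp [he, ha.2]
  rw [hprod, hsum]
  field_simp
  ring

/-- Let `j ≥ 1`, `n = 2j+4`, and `A = J_n - I_n + D` where `D` is a diagonal
`(0,1)`-matrix with exactly `j+2` ones on the diagonal (the complete graph `K_{2j+4}` with
self-loops on `j+2` vertices). Then the eigenvalues of `A` are
`((2j+3) + √(4j²+16j+17))/2`, `0` with multiplicity `j+1`, `-1` with multiplicity `j+1`,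
and `((2j+3) - √(4j²+16j+17))/2`; consequently
`λ_1(A) - λ_{n-j}(A) = ((2j+5) + √(4j²+16j+17))/2`. -/
theorem closed_complete_graph_spectrum (j : ℕ) (hj : 1 ≤ j)
    (D : Matrix (Fin (2 * j + 4)) (Fin (2 * j + 4)) ℝ) (hDdiag : D.IsDiag)
    (hD01 : ∀ a, D a a = 0 ∨ D a a = 1)
    (hDcard : (Finset.univ.filter fun a => D a a = 1).card = j + 2)
    (A : Matrix (Fin (2 * j + 4)) (Fin (2 * j + 4)) ℝ)
    (hAdef : A = (Matrix.of fun (_ : Fin (2 * j + 4)) (_ : Fin (2 * j + 4)) => (1 : ℝ))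
        - 1 + D)
    (hA : A.IsHermitian) :
    (Finset.univ.val.map hA.eigenvalues =
      ((2 * (j : ℝ) + 3 + Real.sqrt (4 * (j : ℝ) ^ 2 + 16 * (j : ℝ) + 17)) / 2) ::ₘ
        ((2 * (j : ℝ) + 3 - Real.sqrt (4 * (j : ℝ) ^ 2 + 16 * (j : ℝ) + 17)) / 2) ::ₘ
        (Multiset.replicate (j + 1) (0 : ℝ) + Multiset.replicate (j + 1) (-1 : ℝ))) ∧
    ∀ μ : Fin (2 * j + 4) → ℝ, Antitone μ →
      Finset.univ.val.map μ = Finset.univ.val.map hA.eigenvalues →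
      μ ⟨0, by omega⟩ - μ ⟨j + 3, by omega⟩ =
        (2 * (j : ℝ) + 5 + Real.sqrt (4 * (j : ℝ) ^ 2 + 16 * (j : ℝ) + 17)) / 2 := by
  set s : ℝ := Real.sqrt (4 * (j : ℝ) ^ 2 + 16 * (j : ℝ) + 17) with hs
  set r₁ : ℝ := (2 * (j : ℝ) + 3 + s) / 2 with hr₁
  set r₂ : ℝ := (2 * (j : ℝ) + 3 - s) / 2 with hr₂
  have hd0 : (0:ℝ) ≤ 4 * (j : ℝ) ^ 2 + 16 * (j : ℝ) + 17 := by positivity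
  have hs2 : s ^ 2 = 4 * (j : ℝ) ^ 2 + 16 * (j : ℝ) + 17 := Real.sq_sqrt hd0
  have hsge : 2 * (j:ℝ) + 3 ≤ s := by
    have h := Real.sqrt_le_sqrt (show (2*(j:ℝ)+3)^2 ≤ 4 * (j : ℝ) ^ 2 + 16 * (j : ℝ) + 17 by
      nlinarith [Nat.cast_nonneg (α := ℝ) j])
    rwa [Real.sqrt_sq (by positivity)] at h
  have hsle : s ≤ 2 * (j:ℝ) + 5 := by
    have h := Real.sqrt_le_sqrt (show 4 * (j : ℝ) ^ 2 + 16 * (j : ℝ) + 17 ≤ (2*(j:ℝ)+5)^2 by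
      nlinarith [Nat.cast_nonneg (α := ℝ) j])
    rwa [Real.sqrt_sq (by positivity)] at h
  -- the characteristic polynomial of A
  have hcharA : A.charpoly =
      X ^ (j+1) * (X+1) ^ (j+1) * (X^2 - C (2*(j:ℝ)+3) * X - C ((j:ℝ)+2)) := by
    apply Polynomial.eq_of_infinite_eval_eq
    apply Set.Infinite.mono (s := ({(0:ℝ), -1} : Set ℝ)ᶜ)
    · intro x hx
      simp only [Set.mem_compl_iff, Set.mem_insert_iff, Set.mem_singleton_iff, not_or] at hx
      obtain ⟨hx0, hxm1⟩ := hx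
      have hx1 : x + 1 ≠ 0 := by intro h; apply hxm1; linarith
      simp only [Set.mem_setOf_eq]
      rw [myEvalCharpoly, detStep j D hDdiag hD01 hDcard A hAdef x hx0 hx1]
      simp [eval_mul, eval_pow, eval_add, eval_sub, eval_C, eval_X]
    · exact Set.Finite.infinite_compl (by simp)
  -- target multiset
  set m : Multiset ℝ := r₁ ::ₘ r₂ ::ₘ
      (Multiset.replicate (j + 1) (0 : ℝ) + Multiset.replicate (j + 1) (-1 : ℝ)) with hm
  have hquad : (X - C r₁) * (X - C r₂) = X^2 - C (2*(j:ℝ)+3) * X - C ((j:ℝ)+2) := by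
    have hsum : r₁ + r₂ = 2*(j:ℝ)+3 := by rw [hr₁, hr₂]; ring
    have hprod : r₁ * r₂ = -((j:ℝ)+2) := by
      rw [hr₁, hr₂]; linear_combination (-1/4 : ℝ) * hs2
    have expand : (X - C r₁) * (X - C r₂)
        = X^2 - (C r₁ + C r₂) * X + C r₁ * C r₂ := by ring
    rw [expand, ← C_add, ← C_mul, hsum, hprod, map_neg]
    ring
  have hmprod : (m.map fun a => X - C a).prod =
      X ^ (j+1) * (X+1) ^ (j+1) * (X^2 - C (2*(j:ℝ)+3) * X - C ((j:ℝ)+2)) := by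
    rw [hm]
    simp only [Multiset.map_cons, Multiset.prod_cons, Multiset.map_add, Multiset.prod_add,
      Multiset.map_replicate, Multiset.prod_replicate, map_zero, sub_zero, map_neg, C_1,
      sub_neg_eq_add]
    rw [← mul_assoc, hquad]
    ring
  have part1 : Finset.univ.val.map hA.eigenvalues = m := by
    have h1 : ((Finset.univ.val.map hA.eigenvalues).map fun a => X - C a).prod
        = A.charpoly := by
      rw [myCharpolyHerm A hA, Multiset.map_map, Finset.prod_eq_multiset_prod]
      rfl
    have h2 := congrArg Polynomial.roots (h1.trans (hcharA.trans hmprod.symm))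
    rwa [Polynomial.roots_multiset_prod_X_sub_C, Polynomial.roots_multiset_prod_X_sub_C] at h2
  refine ⟨part1, ?_⟩
  intro μ hmono hmult
  have hμm : Finset.univ.val.map μ = m := hmult.trans part1
  set L : List ℝ := r₁ :: (List.replicate (j+1) (0:ℝ) ++ r₂ :: List.replicate (j+1) (-1:ℝ))
    with hL
  have hcoeL : ((L : List ℝ) : Multiset ℝ) = m := by
    rw [hL, hm]
    rw [← Multiset.cons_coe, ← Multiset.coe_add, ← Multiset.cons_coe,
      ← Multiset.coe_replicate, ← Multiset.coe_replicate, Multiset.add_cons]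
  have hperm : List.Perm (List.ofFn μ) L := by
    rw [← Multiset.coe_eq_coe, hcoeL, ← Fin.univ_val_map, hμm]
  have hsorted1 : List.Pairwise (· ≥ ·) (List.ofFn μ) := by
    rw [List.pairwise_ofFn]
    intro i k h
    exact hmono h.le
  have hs0 : (0:ℝ) ≤ s := le_trans (by positivity) hsge
  have hr₁0 : (0:ℝ) ≤ r₁ := by rw [hr₁]; linarith
  have hr₂0 : r₂ ≤ 0 := by rw [hr₂]; linarith
  have hr₂1 : (-1:ℝ) ≤ r₂ := by rw [hr₂]; linarith
  have hr₁₂ : r₂ ≤ r₁ := by rw [hr₁, hr₂]; linarith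
  have hsorted2 : List.Pairwise (· ≥ ·) L := by
    rw [hL]
    simp only [List.pairwise_cons, List.pairwise_append, List.pairwise_cons,
      List.pairwise_replicate, List.mem_append, List.mem_cons, List.mem_replicate,
      ge_iff_le]
    refine ⟨?_, Or.inr le_rfl, ⟨?_, Or.inr le_rfl⟩, ?_⟩
    · rintro a (⟨-, rfl⟩ | rfl | ⟨-, rfl⟩) <;> linarith
    · rintro a ⟨-, rfl⟩; linarith
    · rintro a ⟨-, rfl⟩ b (rfl | ⟨-, rfl⟩) <;> linarith
  have heq : List.ofFn μ = L := List.Perm.eq_of_pairwise' hsorted1 hsorted2 hperm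
  have hlen : L.length = 2 * j + 4 := by simp [hL]; omega
  have h0 : μ ⟨0, by omega⟩ = r₁ := by
    have h : (List.ofFn μ)[0]'(by simp) = L[0]'(by rw [hlen]; omega) := by
      simp only [heq]
    rw [List.getElem_ofFn] at h
    have h2 : L[0]'(by rw [hlen]; omega) = r₁ := by
      show (r₁ :: (List.replicate (j+1) (0:ℝ) ++ r₂ :: List.replicate (j+1) (-1:ℝ)))[0]'(by simp) = r₁
      simp
    exact h.trans h2
  have h3 : μ ⟨j + 3, by omega⟩ = -1 := by
    have h : (List.ofFn μ)[j+3]'(by simp; omega) = L[j+3]'(by rw [hlen]; omega) := by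
      simp only [heq]
    rw [List.getElem_ofFn] at h
    have h2 : L[j+3]'(by rw [hlen]; omega) = -1 := by
      show (r₁ :: (List.replicate (j+1) (0:ℝ) ++ r₂ :: List.replicate (j+1) (-1:ℝ)))[j+2+1]'(by simp only [List.length_cons, List.length_append, List.length_replicate]; omega) = -1
      rw [List.getElem_cons_succ, List.getElem_append_right (by simp)]
      simp
    exact h.trans h2
  rw [h0, h3, hr₁]
  ring
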